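/- Let $\rho_\epsilon(z,w) = \varepsilon_0(|z|^8 + c\,\mathrm{Re}(|z|^2 z^6)) + |w|^2 + |z|^{10} + \epsilon|z|^2 - 1$ on $\mathbb{C}^2$, with $\varepsilon_0 > 0$, $2 < c < 16/7$, and $0 < \epsilon < 1$. Then the set $M_\epsilon = \{\rho_\epsilon = 0\}$ is compact, and for $\tilde\epsilon$ sufficiently small and $0 < \epsilon \le \tilde\epsilon$, the intersection of $M_\epsilon$ with the complex line $\{w = 1\}$ is an infinite set. -/

import Mathlib

noncomputable section

/-- The defining function `ρ_ε(z,w) = ε₀(|z|⁸ + c Re(|z|² z⁶)) + |w|² + |z|¹⁰ + ε|z|² - 1`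
of the perturbed Kohn-Nirenberg hypersurface. -/
def rhoKN (ε₀ c e : ℝ) (p : ℂ × ℂ) : ℝ :=
  ε₀ * (‖p.1‖ ^ 8 + c * (‖p.1‖ ^ 2 * (p.1 ^ 6).re))
    + ‖p.2‖ ^ 2 + ‖p.1‖ ^ 10 + e * ‖p.1‖ ^ 2 - 1

lemma rhoKN_continuous (ε₀ c e : ℝ) : Continuous (rhoKN ε₀ c e) := by
  unfold rhoKN
  fun_prop

lemma rhoKN_circle (ε₀ c e r θ : ℝ) (hr : 0 ≤ r) :
    rhoKN ε₀ c e ((r : ℂ) * Complex.exp (θ * Complex.I), 1)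
      = ε₀ * (r ^ 8 + c * (r ^ 2 * (r ^ 6 * Real.cos (6 * θ)))) + r ^ 10 + e * r ^ 2 := by
  have habs : ‖(r : ℂ) * Complex.exp (θ * Complex.I)‖ = r := by
    rw [norm_mul, Complex.norm_exp_ofReal_mul_I, Complex.norm_of_nonneg hr, mul_one]
  have hre : (((r : ℂ) * Complex.exp (θ * Complex.I)) ^ 6).re = r ^ 6 * Real.cos (6 * θ) := by
    rw [mul_pow, ← Complex.exp_nat_mul]
    rw [show ((6 : ℕ) : ℂ) * ((θ : ℂ) * Complex.I) = ((6 * θ : ℝ) : ℂ) * Complex.I by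
      push_cast; ring]
    rw [show ((r : ℂ)) ^ 6 = ((r ^ 6 : ℝ) : ℂ) by push_cast; ring]
    rw [Complex.re_ofReal_mul, Complex.exp_ofReal_mul_I_re]
  unfold rhoKN
  simp only [habs, hre, norm_one]
  ring

lemma rhoKN_bound (ε₀ c e : ℝ) (hε₀ : 0 < ε₀) (hc : 2 < c) (he : 0 < e)
    {p : ℂ × ℂ} (h : rhoKN ε₀ c e p = 0) :
    ‖p.1‖ ≤ 1 + ε₀ * c ∧ ‖p.2‖ ≤ 1 + ε₀ * c * (1 + ε₀ * c) ^ 8 := by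
  set r := ‖p.1‖ with hrdef
  set w := ‖p.2‖ with hwdef
  have hr : 0 ≤ r := norm_nonneg _
  have hw : 0 ≤ w := norm_nonneg _
  have hre : -(r ^ 6) ≤ (p.1 ^ 6).re := by
    have h1 : |(p.1 ^ 6).re| ≤ ‖p.1 ^ 6‖ := Complex.abs_re_le_norm _
    rw [norm_pow] at h1
    linarith [neg_abs_le (p.1 ^ 6).re]
  unfold rhoKN at h
  rw [← hrdef, ← hwdef] at h
  have hc0 : 0 < c := by linarith
  have hmul : -(ε₀ * c * r ^ 2 * r ^ 6) ≤ ε₀ * c * r ^ 2 * (p.1 ^ 6).re := by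
    have h0 : 0 ≤ ε₀ * c * r ^ 2 := by positivity
    nlinarith [mul_le_mul_of_nonneg_left hre h0]
  have her2 : 0 ≤ e * r ^ 2 := by positivity
  have key : w ^ 2 + r ^ 10 ≤ 1 + ε₀ * (c - 1) * r ^ 8 := by nlinarith
  have hrle : r ≤ 1 + ε₀ * c := by
    by_contra hlt
    push_neg at hlt
    have h1 : (1 : ℝ) ≤ r := by nlinarith
    have h8 : (1 : ℝ) ≤ r ^ 8 := by
      calc (1 : ℝ) = 1 ^ 8 := by norm_num
      _ ≤ r ^ 8 := pow_le_pow_left₀ zero_le_one h1 8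
    have h2 : ε₀ * (c - 1) + 1 ≤ r ^ 2 := by nlinarith
    nlinarith [mul_le_mul h8 h2 (by nlinarith) (by nlinarith : (0:ℝ) ≤ r ^ 8), sq_nonneg w]
  refine ⟨hrle, ?_⟩
  have hR : (0 : ℝ) ≤ 1 + ε₀ * c := by positivity
  have h8 : r ^ 8 ≤ (1 + ε₀ * c) ^ 8 := pow_le_pow_left₀ hr hrle 8
  have hB : (0:ℝ) ≤ (1 + ε₀ * c) ^ 8 := pow_nonneg hR 8
  have hw2 : w ^ 2 ≤ 1 + ε₀ * (c - 1) * (1 + ε₀ * c) ^ 8 := by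
    nlinarith [mul_le_mul_of_nonneg_left h8 (mul_nonneg hε₀.le (by linarith : (0:ℝ) ≤ c - 1)),
      pow_nonneg hr 10]
  have hC1 : (1:ℝ) ≤ 1 + ε₀ * c * (1 + ε₀ * c) ^ 8 := by nlinarith [mul_nonneg (mul_nonneg hε₀.le hc0.le) hB]
  by_contra hgt
  push_neg at hgt
  have hsq := mul_self_lt_mul_self (by positivity) hgt
  nlinarith [hw2, hC1, hB, hsq]

theorem stmt10 (ε₀ c : ℝ) (hε₀ : 0 < ε₀) (hc1 : 2 < c) (hc2 : c < 16 / 7) :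
    (∀ e : ℝ, 0 < e → e < 1 → IsCompact {p : ℂ × ℂ | rhoKN ε₀ c e p = 0}) ∧
    ∃ te : ℝ, 0 < te ∧ ∀ e : ℝ, 0 < e → e ≤ te →
      {z : ℂ | rhoKN ε₀ c e (z, 1) = 0}.Infinite := by
  constructor
  · -- compactness
    intro e he he1
    have hclosed : IsClosed {p : ℂ × ℂ | rhoKN ε₀ c e p = 0} :=
      isClosed_eq (rhoKN_continuous ε₀ c e) continuous_const
    have hbdd : Bornology.IsBounded {p : ℂ × ℂ | rhoKN ε₀ c e p = 0} := by
      set K := max (1 + ε₀ * c) (1 + ε₀ * c * (1 + ε₀ * c) ^ 8)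
      apply Bornology.IsBounded.subset (Metric.isBounded_closedBall (x := (0 : ℂ × ℂ)) (r := K))
      intro p hp
      obtain ⟨h1, h2⟩ := rhoKN_bound ε₀ c e hε₀ hc1 he hp
      simp only [Metric.mem_closedBall, dist_zero_right]
      rw [Prod.norm_def]
      apply max_le
      · exact le_trans (by exact h1) (le_max_left _ _)
      · exact le_trans (by exact h2) (le_max_right _ _)
    exact Metric.isCompact_of_isClosed_isBounded hclosed hbdd
  · -- infiniteness
    set s : ℝ := min 1 (ε₀ / 2) with hs
    have hs0 : 0 < s := lt_min one_pos (by positivity)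
    have hs1 : s ≤ 1 := min_le_left _ _
    have hsε : s ≤ ε₀ / 2 := min_le_right _ _
    refine ⟨(s / 2) ^ 6 * ε₀ / 4, by positivity, fun e he hte => ?_⟩
    -- for each radius r in [s/2, s], find a zero on the circle of radius r
    have H : ∀ r ∈ Set.Icc (s / 2) s, ∃ z : ℂ, ‖z‖ = r ∧ rhoKN ε₀ c e (z, 1) = 0 := by
      intro r hrmem
      obtain ⟨hrl, hru⟩ := hrmem
      have hr0 : 0 < r := lt_of_lt_of_le (by positivity) hrl
      set g : ℝ → ℝ := fun θ =>
        ε₀ * (r ^ 8 + c * (r ^ 2 * (r ^ 6 * Real.cos (6 * θ)))) + r ^ 10 + e * r ^ 2 with hg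
      have hgc : ContinuousOn g (Set.Icc 0 (Real.pi / 6)) := by fun_prop
      have hr6 : (s / 2) ^ 6 ≤ r ^ 6 := pow_le_pow_left₀ (by positivity) hrl 6
      have hr2 : r ^ 2 ≤ ε₀ / 2 := by nlinarith
      have hr8pos : (0:ℝ) < r ^ 8 := pow_pos hr0 8
      have hb : e ≤ r ^ 6 * (ε₀ / 4) := by
        have hmm := mul_le_mul_of_nonneg_right hr6 (by positivity : (0:ℝ) ≤ ε₀ / 4)
        calc e ≤ (s / 2) ^ 6 * ε₀ / 4 := hte
        _ = (s / 2) ^ 6 * (ε₀ / 4) := by ring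
        _ ≤ r ^ 6 * (ε₀ / 4) := hmm
      have e1 : r ^ 10 ≤ r ^ 8 * (ε₀ / 2) := by
        nlinarith [mul_le_mul_of_nonneg_left hr2 hr8pos.le]
      have e2 : e * r ^ 2 ≤ ε₀ / 4 * r ^ 8 := by
        nlinarith [mul_le_mul_of_nonneg_right hb (sq_nonneg r)]
      have hcc : (0:ℝ) ≤ (c - 2) * (ε₀ * r ^ 8) :=
        mul_nonneg (by linarith) (by positivity)
      have hgneg : g (Real.pi / 6) < 0 := by
        simp only [hg]
        rw [show 6 * (Real.pi / 6) = Real.pi by ring, Real.cos_pi]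
        nlinarith [e1, e2, hcc, hr8pos]
      have hgpos : 0 < g 0 := by
        simp only [hg, mul_zero, Real.cos_zero]
        nlinarith [mul_pos (mul_pos hε₀ (by linarith : (0:ℝ) < c))
          (mul_pos (pow_pos hr0 2) (pow_pos hr0 6)),
          mul_pos hε₀ hr8pos, mul_pos he (pow_pos hr0 2), pow_pos hr0 10]
      have hmem : (0 : ℝ) ∈ Set.Icc (g (Real.pi / 6)) (g 0) := ⟨hgneg.le, hgpos.le⟩
      obtain ⟨θ, hθmem, hθ⟩ := intermediate_value_Icc' (by positivity : (0:ℝ) ≤ Real.pi / 6) hgc hmem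
      refine ⟨(r : ℂ) * Complex.exp (θ * Complex.I), ?_, ?_⟩
      · rw [norm_mul, Complex.norm_exp_ofReal_mul_I, Complex.norm_of_nonneg hr0.le,
          mul_one]
      · rw [rhoKN_circle ε₀ c e r θ hr0.le]
        exact hθ
    classical
    set f : ℝ → ℂ := fun r => if h : r ∈ Set.Icc (s / 2) s then (H r h).choose else 0 with hf
    have habsf : ∀ r ∈ Set.Icc (s / 2) s, ‖f r‖ = r := by
      intro r hr
      rw [hf]
      simp only [dif_pos hr]
      exact (H r hr).choose_spec.1
    apply Set.infinite_of_injOn_mapsTo (f := f) (s := Set.Icc (s / 2) s)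
    · intro a ha b hb hab
      rw [← habsf a ha, ← habsf b hb, hab]
    · intro r hr
      rw [hf]
      simp only [dif_pos hr, Set.mem_setOf_eq]
      exact (H r hr).choose_spec.2
    · exact Set.infinite_coe_iff.mp (Set.Icc.infinite (by nlinarith))

end
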